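/- Let k be an algebraically closed field and let A be a finite-dimensional commutative Frobenius algebra over k, with comultiplication Δ : A → A ⊗[k] A, counit ε : A → k and multiplication m : A ⊗[k] A → A. Then A is a semisimple ring if and only if the window endomorphism m ∘ Δ : A → A is bijective. -/

import Mathlib

open TensorProduct

section Aux

variable {k : Type*} [Field k] {A : Type*} [CommRing A] [Algebra k A]

/-- `t ⊗ 1` then multiply the last two factors: identity. -/
lemma aux_lTensor_mul_assoc_one (t : A ⊗[k] A) :
    (LinearMap.lTensor A (LinearMap.mul' k A))
      ((TensorProduct.assoc k A A A) (t ⊗ₜ (1 : A))) = t := by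
  induction t using TensorProduct.induction_on with
  | zero => rw [zero_tmul, LinearEquiv.map_zero, map_zero]
  | tmul a b => simp [TensorProduct.assoc_tmul]
  | add x y hx hy => rw [add_tmul, LinearEquiv.map_add, map_add, hx, hy]

lemma aux_rTensor_mul_assoc_symm (x : A) (t : A ⊗[k] A) :
    (LinearMap.rTensor A (LinearMap.mul' k A))
      ((TensorProduct.assoc k A A A).symm (x ⊗ₜ t))
    = LinearMap.rTensor A (LinearMap.mulLeft k x) t := by
  induction t using TensorProduct.induction_on with
  | zero => rw [tmul_zero, LinearEquiv.map_zero, map_zero, map_zero]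
  | tmul a b => simp [TensorProduct.assoc_symm_tmul]
  | add u v hu hv => rw [tmul_add, LinearEquiv.map_add, map_add, map_add, hu, hv]

lemma aux_mul_rTensor_mulLeft (x : A) (t : A ⊗[k] A) :
    (LinearMap.mul' k A) (LinearMap.rTensor A (LinearMap.mulLeft k x) t)
      = x * (LinearMap.mul' k A) t := by
  induction t using TensorProduct.induction_on with
  | zero => simp
  | tmul a b => simp [mul_assoc]
  | add u v hu hv => simp [hu, hv, mul_add]

lemma aux_mul_lTensor_mulLeft (x : A) (t : A ⊗[k] A) :
    (LinearMap.mul' k A) (LinearMap.lTensor A (LinearMap.mulLeft k x) t)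
      = x * (LinearMap.mul' k A) t := by
  induction t using TensorProduct.induction_on with
  | zero => simp
  | tmul a b => simp [mul_left_comm]
  | add u v hu hv => simp [hu, hv, mul_add]

end Aux

/-- Let `k` be an algebraically closed field and `A` a finite-dimensional
commutative Frobenius algebra over `k` (comultiplication `Δ`, counit `ε`, multiplication
`m = LinearMap.mul' k A`).  Then `A` is a semisimple ring if and only if the window
endomorphism `m ∘ Δ : A → A` is bijective. -/
theorem semisimple_iff_window_bijective
    {k : Type*} [Field k] [IsAlgClosed k]
    {A : Type*} [CommRing A] [Algebra k A] [FiniteDimensional k A]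
    (Δ : A →ₗ[k] A ⊗[k] A) (ε : A →ₗ[k] k)
    (hcoassoc : (TensorProduct.assoc k A A A).toLinearMap.comp
        ((LinearMap.rTensor A Δ).comp Δ) = (LinearMap.lTensor A Δ).comp Δ)
    (hcounit_left : (TensorProduct.lid k A).toLinearMap.comp
        ((LinearMap.rTensor A ε).comp Δ) = LinearMap.id)
    (hcounit_right : (TensorProduct.rid k A).toLinearMap.comp
        ((LinearMap.lTensor A ε).comp Δ) = LinearMap.id)
    (hcocomm : (TensorProduct.comm k A A).toLinearMap.comp Δ = Δ)
    (hfrob : (LinearMap.lTensor A (LinearMap.mul' k A)).comp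
        ((TensorProduct.assoc k A A A).toLinearMap.comp (LinearMap.rTensor A Δ))
      = (LinearMap.rTensor A (LinearMap.mul' k A)).comp
        ((TensorProduct.assoc k A A A).symm.toLinearMap.comp (LinearMap.lTensor A Δ))) :
    IsSemisimpleRing A ↔ Function.Bijective ((LinearMap.mul' k A).comp Δ) := by
  classical
  -- trivial case
  by_cases hA : Subsingleton A
  · constructor
    · intro _
      exact ⟨fun a b _ => Subsingleton.elim a b, fun a => ⟨0, Subsingleton.elim _ a⟩⟩
    · intro _
      have : IsArtinianRing A := isArtinian_of_tower k inferInstance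
      have : IsReduced A := ⟨fun x _ => Subsingleton.elim x 0⟩
      exact IsArtinianRing.isSemisimpleRing_of_isReduced A
  have : Nontrivial A := not_subsingleton_iff_nontrivial.mp hA
  set m : A ⊗[k] A →ₗ[k] A := LinearMap.mul' k A with hm
  set w : A := m (Δ 1) with hw
  -- Step A: Δ x = (x ⊗ 1) · Δ 1
  have stepA : ∀ x : A, Δ x = LinearMap.rTensor A (LinearMap.mulLeft k x) (Δ 1) := by
    intro x
    have h := LinearMap.congr_fun hfrob (x ⊗ₜ (1 : A))
    simp only [LinearMap.comp_apply, LinearEquiv.coe_coe, LinearMap.rTensor_tmul,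
      LinearMap.lTensor_tmul] at h
    rwa [aux_lTensor_mul_assoc_one, aux_rTensor_mul_assoc_symm] at h
  -- Step B: the window map is multiplication by w
  have stepB : ∀ x : A, (m.comp Δ) x = w * x := by
    intro x
    rw [LinearMap.comp_apply, stepA x, aux_mul_rTensor_mulLeft, ← hw, mul_comm]
  -- the pairing map β a = ε (a * ·)
  set β : A →ₗ[k] Module.Dual k A :=
    ((LinearMap.llcomp k A A k ε).comp (LinearMap.mul k A)) with hβ
  have hβapp : ∀ a b : A, β a b = ε (a * b) := fun a b => rfl
  set Φ : A ⊗[k] A →ₗ[k] (A →ₗ[k] A) :=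
    (dualTensorHom k A A).comp (LinearMap.rTensor A β) with hΦ
  have hΦtmul : ∀ (b c x : A), Φ (b ⊗ₜ c) x = ε (b * x) • c := by
    intro b c x
    simp [hΦ, dualTensorHom_apply, hβapp]
  -- C1 : Φ (Δ 1) = id
  have C1 : Φ (Δ 1) = LinearMap.id := by
    ext a
    have key : ∀ t : A ⊗[k] A, Φ t a
        = (TensorProduct.lid k A)
            (LinearMap.rTensor A ε (LinearMap.rTensor A (LinearMap.mulLeft k a) t)) := by
      intro t
      induction t using TensorProduct.induction_on with
      | zero => simp
      | tmul b c => simp [hΦtmul, mul_comm]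
      | add u v hu hv => simp [hu, hv]
    rw [key, ← stepA a]
    exact LinearMap.congr_fun hcounit_left a
  -- C2 : trace formula
  have C2 : ∀ (φ : A →ₗ[k] A) (t : A ⊗[k] A),
      LinearMap.trace k A (φ ∘ₗ Φ t) = ε (m (LinearMap.lTensor A φ t)) := by
    intro φ t
    induction t using TensorProduct.induction_on with
    | zero => simp
    | tmul b c =>
      have hcomp : φ ∘ₗ Φ (b ⊗ₜ c) = (dualTensorHom k A A) (β b ⊗ₜ φ c) := by
        ext x
        simp [hΦtmul, dualTensorHom_apply, hβapp]
      rw [hcomp, LinearMap.trace_eq_contract_apply, contractLeft_apply]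
      simp [hβapp, hm]
    | add u v hu hv =>
      rw [map_add, LinearMap.comp_add, map_add, hu, hv, map_add, map_add, map_add]
  have trace_formula : ∀ x : A,
      LinearMap.trace k A (LinearMap.mulLeft k x) = ε (x * w) := by
    intro x
    have h1 : LinearMap.mulLeft k x = (LinearMap.mulLeft k x) ∘ₗ Φ (Δ 1) := by
      rw [C1]; rfl
    rw [h1, C2, aux_mul_lTensor_mulLeft, ← hw]
  -- C3 : nondegeneracy
  have C3 : ∀ x : A, (∀ a : A, ε (a * x) = 0) → x = 0 := by
    intro x hx
    have : Φ (Δ 1) x = x := by rw [C1]; rfl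
    rw [← this]
    have : ∀ t : A ⊗[k] A, Φ t x = 0 := by
      intro t
      induction t using TensorProduct.induction_on with
      | zero => simp
      | tmul b c => simp [hΦtmul, hx b]
      | add u v hu hv => simp [hu, hv]
    exact this (Δ 1)
  have : IsArtinianRing A := isArtinian_of_tower k inferInstance
  constructor
  · -- semisimple → bijective
    intro hss
    suffices hu : IsUnit w by
      obtain ⟨u, hu⟩ := hu
      have hinj : Function.Injective (m.comp Δ) := by
        intro a b hab
        rw [stepB, stepB, ← hu] at hab
        have h2 := congrArg (fun t => ((↑u⁻¹ : A)) * t) hab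
        simpa only [Units.inv_mul_cancel_left] using h2
      have hsurj : Function.Surjective (m.comp Δ) := by
        intro a
        refine ⟨(↑u⁻¹ : A) * a, ?_⟩
        rw [stepB, ← mul_assoc, ← hu, Units.mul_inv, one_mul]
      exact ⟨hinj, hsurj⟩
    by_contra hnu
    -- w lies in a maximal ideal M; take a complement J
    obtain ⟨M, hM, hwM⟩ := (Ideal.span {w} : Ideal A).exists_le_maximal
      (by rwa [ne_eq, Ideal.span_singleton_eq_top])
    have hwM' : w ∈ M := hwM (Ideal.subset_span rfl)
    obtain ⟨J, hJ⟩ := exists_isCompl (M : Submodule A A)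
    -- decompose 1 = x + e
    have h1 : (1 : A) ∈ (M : Submodule A A) ⊔ J := by
      rw [hJ.sup_eq_top]; trivial
    obtain ⟨x, hxM, e, heJ, hxe⟩ := Submodule.mem_sup.mp h1
    have hMJ : ∀ p ∈ M, ∀ q ∈ J, p * q = 0 := by
      intro p hp q hq
      have h1 : p * q ∈ (M : Submodule A A) := M.mul_mem_right q hp
      have h2 : p * q ∈ J := by
        simpa [smul_eq_mul] using J.smul_mem p hq
      have : p * q ∈ (M : Submodule A A) ⊓ J := ⟨h1, h2⟩
      rwa [hJ.inf_eq_bot, Submodule.mem_bot] at this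
    have hew : e * w = 0 := by rw [mul_comm]; exact hMJ w hwM' e heJ
    -- mulLeft e is the projection onto J
    have hproj : LinearMap.IsProj (J.restrictScalars k) (LinearMap.mulLeft k e) := by
      constructor
      · intro a
        simpa [mul_comm] using J.smul_mem a heJ
      · intro a ha
        have ha' : x * a = 0 := hMJ x hxM a ha
        have hxa : (x + e) * a = a := by rw [hxe, one_mul]
        calc LinearMap.mulLeft k e a = e * a := rfl
          _ = (x + e) * a - x * a := by ring
          _ = a := by rw [hxa, ha', sub_zero]
    -- trace of the projection is the dimension of J
    have htr : LinearMap.trace k A (LinearMap.mulLeft k e)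
        = (Module.finrank k (J.restrictScalars k) : k) := hproj.trace
    -- J ≃ A ⧸ M, which is 1-dimensional since k is algebraically closed
    have hdim : Module.finrank k (J.restrictScalars k) = 1 := by
      have e₁ : (A ⧸ (M : Submodule A A)) ≃ₗ[A] J :=
        Submodule.quotientEquivOfIsCompl _ _ hJ
      have e₂ : (A ⧸ (M : Submodule A A)) ≃ₗ[k] (J.restrictScalars k) :=
        e₁.restrictScalars k
      rw [← e₂.finrank_eq]
      -- A ⧸ M is a field, finite dimensional over the algebraically closed k
      letI : Field (A ⧸ M) := Ideal.Quotient.field M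
      have hsurj : Function.Surjective (algebraMap k (A ⧸ M)) :=
        IsAlgClosed.algebraMap_bijective_of_isIntegral.2
      have hbij : Function.Bijective (Algebra.linearMap k (A ⧸ M)) :=
        ⟨(algebraMap k (A ⧸ M)).injective, hsurj⟩
      have e₃ : k ≃ₗ[k] (A ⧸ M) := LinearEquiv.ofBijective _ hbij
      rw [← e₃.finrank_eq, Module.finrank_self]
    rw [hdim] at htr
    have : (1 : k) = 0 := by
      rw [Nat.cast_one] at htr
      rw [← htr, trace_formula, hew, map_zero]
    exact one_ne_zero this
  · -- bijective → semisimple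
    intro hbij
    have hu : IsUnit w := by
      obtain ⟨u, hu⟩ := hbij.2 1
      rw [stepB] at hu
      exact IsUnit.of_mul_eq_one (a := w) u hu
    have hred : IsReduced A := by
      constructor
      intro x hx
      have hxw : x * w = 0 := by
        apply C3
        intro a
        have hnil : IsNilpotent (LinearMap.mulLeft k (x * a)) := by
          obtain ⟨n, hn⟩ := hx
          exact ⟨n, by rw [LinearMap.pow_mulLeft, mul_pow, hn, zero_mul,
            LinearMap.mulLeft_zero_eq_zero]⟩
        have htr0 : LinearMap.trace k A (LinearMap.mulLeft k (x * a)) = 0 :=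
          (LinearMap.isNilpotent_trace_of_isNilpotent hnil).eq_zero
        rw [trace_formula] at htr0
        calc ε (a * (x * w)) = ε (x * a * w) := by ring_nf
          _ = 0 := htr0
      obtain ⟨u, hu⟩ := hu
      have : x * (w * ↑u⁻¹) = 0 := by rw [← mul_assoc, hxw, zero_mul]
      rwa [← hu, Units.mul_inv, mul_one] at this
    exact IsArtinianRing.isSemisimpleRing_of_isReduced A
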